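/- Let k be an algebraically closed field of characteristic 2, let a_1 ≠ a_2 in k, and let b_1,b_2,b_3,b_4,c_1,c_2,c_3,d_1,d_2,d_3 ∈ k with b_1b_2 = b_3b_4 and (b_1,b_2,b_3,b_4) ≠ (0,0,0,0). In k[X_1,X_2,X_3,Y_1,Y_2,Y_3] set Q_1 = X_1Y_1 + X_2Y_2 + X_3Y_3 and Q_2 = a_1X_1Y_1 + a_2(X_2Y_2 + X_3Y_3) + Σ_{i=1}^{3}(c_iX_i² + d_iY_i²) + b_1X_2Y_3 + b_2X_3Y_2 + b_3X_2X_3 + b_4Y_2Y_3. Then there exists a nonzero vector v ∈ k^6 with Q_1(v) = Q_2(v) = 0 at which the 2×6 Jacobian matrix of (Q_1,Q_2) has rank at most 1, if and only if c_1 d_1 = 0 or b_2b_4c_2 + b_1b_4c_3 + b_1b_3d_2 + b_2b_3d_3 = 0. -/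

import Mathlib

open MvPolynomial

/-- The Grassmannian quadric `Q₁ = X₁Y₁ + X₂Y₂ + X₃Y₃`; coordinates
`(X₁,X₂,X₃,Y₁,Y₂,Y₃) = (X 0, X 1, X 2, X 3, X 4, X 5)`. -/
noncomputable def Q1p (k : Type*) [Field k] : MvPolynomial (Fin 6) k :=
  X 0 * X 3 + X 1 * X 4 + X 2 * X 5

/-- The quadric `Q₂` of case (b) (2-rank one case). -/
noncomputable def Q2b (k : Type*) [Field k]
    (a1 a2 b1 b2 b3 b4 c1 c2 c3 d1 d2 d3 : k) : MvPolynomial (Fin 6) k :=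
  C a1 * (X 0 * X 3) + C a2 * (X 1 * X 4 + X 2 * X 5)
    + C c1 * X 0 ^ 2 + C c2 * X 1 ^ 2 + C c3 * X 2 ^ 2
    + C d1 * X 3 ^ 2 + C d2 * X 4 ^ 2 + C d3 * X 5 ^ 2
    + C b1 * (X 1 * X 5) + C b2 * (X 2 * X 4) + C b3 * (X 1 * X 2) + C b4 * (X 4 * X 5)

section Vec
variable {α : Type*}
lemma v6_0 (a b c d e f : α) : (![a,b,c,d,e,f] : Fin 6 → α) 0 = a := rfl
lemma v6_1 (a b c d e f : α) : (![a,b,c,d,e,f] : Fin 6 → α) 1 = b := rfl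
lemma v6_2 (a b c d e f : α) : (![a,b,c,d,e,f] : Fin 6 → α) 2 = c := rfl
lemma v6_3 (a b c d e f : α) : (![a,b,c,d,e,f] : Fin 6 → α) 3 = d := rfl
lemma v6_4 (a b c d e f : α) : (![a,b,c,d,e,f] : Fin 6 → α) 4 = e := rfl
lemma v6_5 (a b c d e f : α) : (![a,b,c,d,e,f] : Fin 6 → α) 5 = f := rfl
end Vec

section Aux

variable {k : Type*} [Field k]

lemma eval_Q1' (v : Fin 6 → k) : eval v (Q1p k) = v 0 * v 3 + v 1 * v 4 + v 2 * v 5 := by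
  simp [Q1p]

lemma eval_Q2' (a1 a2 b1 b2 b3 b4 c1 c2 c3 d1 d2 d3 : k) (v : Fin 6 → k) :
    eval v (Q2b k a1 a2 b1 b2 b3 b4 c1 c2 c3 d1 d2 d3)
      = a1 * (v 0 * v 3) + a2 * (v 1 * v 4 + v 2 * v 5)
        + c1 * v 0 ^ 2 + c2 * v 1 ^ 2 + c3 * v 2 ^ 2
        + d1 * v 3 ^ 2 + d2 * v 4 ^ 2 + d3 * v 5 ^ 2
        + b1 * (v 1 * v 5) + b2 * (v 2 * v 4) + b3 * (v 1 * v 2) + b4 * (v 4 * v 5) := by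
  simp [Q2b]

lemma pd_Q1' (v : Fin 6 → k) (j : Fin 6) :
    eval v (pderiv j (Q1p k)) = ![v 3, v 4, v 5, v 0, v 1, v 2] j := by
  fin_cases j <;>
    · simp [Q1p, pderiv_X, Pi.single_apply]
      try rfl

set_option maxHeartbeats 1000000 in
lemma pd_Q2' [CharP k 2] (a1 a2 b1 b2 b3 b4 c1 c2 c3 d1 d2 d3 : k) (v : Fin 6 → k) (j : Fin 6) :
    eval v (pderiv j (Q2b k a1 a2 b1 b2 b3 b4 c1 c2 c3 d1 d2 d3))
      = ![a1 * v 3, a2 * v 4 + b1 * v 5 + b3 * v 2, a2 * v 5 + b2 * v 4 + b3 * v 1,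
          a1 * v 0, a2 * v 1 + b2 * v 2 + b4 * v 5, a2 * v 2 + b1 * v 1 + b4 * v 4] j := by
  fin_cases j <;>
    · simp [Q2b, pderiv_X, Pi.single_apply, CharTwo.two_eq_zero]
      try rfl
      try ring

lemma rank_le_one_of_rows' (M : Matrix (Fin 2) (Fin 6) k) (c : k)
    (h : ∀ j, M 1 j = c * M 0 j) : M.rank ≤ 1 := by
  have hM : M = Matrix.replicateCol Unit ![1, c] * Matrix.replicateRow Unit (M 0) := by
    ext i j
    fin_cases i <;> simp [Matrix.mul_apply, Matrix.replicateCol, Matrix.replicateRow, h]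
  calc M.rank ≤ (Matrix.replicateCol Unit ![1, c] : Matrix (Fin 2) Unit k).rank := by
        rw [hM]; exact Matrix.rank_mul_le_left _ _
    _ ≤ Fintype.card Unit := Matrix.rank_le_card_width _
    _ = 1 := by simp

lemma minor_eq_zero' (M : Matrix (Fin 2) (Fin 6) k) (h : M.rank ≤ 1) (i j : Fin 6) :
    M 0 i * M 1 j - M 0 j * M 1 i = 0 := by
  by_contra hd
  set N : Matrix (Fin 2) (Fin 2) k := M.submatrix id ![i, j] with hN
  have h1 : N = M * (1 : Matrix (Fin 6) (Fin 6) k).submatrix (Equiv.refl _) ![i, j] := by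
    rw [Matrix.mul_submatrix_one]
    rfl
  have h2 : N.rank ≤ M.rank := by rw [h1]; exact Matrix.rank_mul_le_left _ _
  have h3 : IsUnit N := by
    rw [Matrix.isUnit_iff_isUnit_det, Matrix.det_fin_two]
    simp only [hN, Matrix.submatrix_apply, id_eq]
    simpa using isUnit_iff_ne_zero.2 hd
  have h4 : N.rank = 2 := by simpa using Matrix.rank_of_isUnit N h3
  omega

lemma key' [CharP k 2] (b1 b2 b3 b4 c2 c3 d2 d3 x2 x3 y2 y3 : k)
    (hb1 : b1 ≠ 0) (hb : b1 * b2 = b3 * b4)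
    (hu1 : b1 * y3 + b3 * x3 = 0) (hu2 : b2 * y2 + b3 * x2 = 0)
    (hu3 : b2 * x3 + b4 * y3 = 0) (hu4 : b1 * x2 + b4 * y2 = 0)
    (hq : x2 * y2 + x3 * y3 = 0)
    (hS : c2 * x2 ^ 2 + c3 * x3 ^ 2 + d2 * y2 ^ 2 + d3 * y3 ^ 2 = 0)
    (hw : ¬ (x2 = 0 ∧ x3 = 0 ∧ y2 = 0 ∧ y3 = 0)) :
    b2 * b4 * c2 + b1 * b4 * c3 + b1 * b3 * d2 + b2 * b3 * d3 = 0 := by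
  have h2 : (2 : k) = 0 := by exact_mod_cast CharP.cast_eq_zero k 2
  have hstar : b4 * y2 ^ 2 + b3 * x3 ^ 2 = 0 := by
    have h : b1 * (b4 * y2 ^ 2 + b3 * x3 ^ 2) = 0 := by
      linear_combination y2 * b1 * hu4 + x3 * b1 * hu1 - b1 ^ 2 * hq
    exact (mul_eq_zero.1 h).resolve_left hb1
  by_cases hb4 : b4 = 0
  · have hb2 : b2 = 0 :=
      (mul_eq_zero.1 (by rw [hb, hb4, mul_zero] : b1 * b2 = 0)).resolve_left hb1
    by_cases hb3 : b3 = 0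
    · simp [hb2, hb3, hb4]
    · have hx3 : x3 = 0 := by
        have h : b3 * x3 ^ 2 = 0 := by linear_combination hstar - y2 ^ 2 * hb4
        exact pow_eq_zero_iff (n := 2) (by norm_num) |>.1 ((mul_eq_zero.1 h).resolve_left hb3)
      have hy3 : y3 = 0 := by
        have h : b1 * y3 = 0 := by linear_combination hu1 - b3 * hx3
        exact (mul_eq_zero.1 h).resolve_left hb1
      have hx2 : x2 = 0 := by
        have h : b3 * x2 = 0 := by linear_combination hu2 - y2 * hb2
        exact (mul_eq_zero.1 h).resolve_left hb3
      have hy2 : y2 ≠ 0 := fun hy2 => hw ⟨hx2, hx3, hy2, hy3⟩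
      have hd2 : d2 = 0 := by
        have h : d2 * y2 ^ 2 = 0 := by
          linear_combination hS - c2 * x2 * hx2 - c3 * x3 * hx3 - d3 * y3 * hy3
        exact (mul_eq_zero.1 h).resolve_right (pow_ne_zero 2 hy2)
      simp [hb2, hb4, hd2]
  · have hx3 : x3 ≠ 0 := by
      intro hx3
      have hy3 : y3 = 0 := by
        have h : b1 * y3 = 0 := by linear_combination hu1 - b3 * hx3
        exact (mul_eq_zero.1 h).resolve_left hb1
      have hy2 : y2 = 0 := by
        have h : b4 * y2 ^ 2 = 0 := by linear_combination hstar - b3 * x3 * hx3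
        exact pow_eq_zero_iff (n := 2) (by norm_num) |>.1 ((mul_eq_zero.1 h).resolve_left hb4)
      have hx2 : x2 = 0 := by
        have h : b1 * x2 = 0 := by linear_combination hu4 - b4 * hy2
        exact (mul_eq_zero.1 h).resolve_left hb1
      exact hw ⟨hx2, hx3, hy2, hy3⟩
    have hE : b1 * (b2 * b4 * c2 + b1 * b4 * c3 + b1 * b3 * d2 + b2 * b3 * d3) * x3 ^ 2 = 0 := by
      linear_combination (b1^2*b4) * hS + c2*b4*(b1*x2 - b4*y2) * hu4 + d3*b4*(b1*y3 - b3*x3) * hu1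
        + (c2*b4^2 + d2*b1^2) * hstar + (b4*c2 + b3*d3)*x3^2 * hb
        + (-(b1^2*b4*c2*x2^2) - b1^2*b4*d2*y2^2 - b1^2*b4*d3*y3^2 + b4*b3^2*d3*x3^2) * h2
    rcases mul_eq_zero.1 hE with h | h
    · exact (mul_eq_zero.1 h).resolve_left hb1
    · exact absurd (pow_eq_zero_iff (n := 2) (by norm_num) |>.1 h) hx3

/-- square injectivity in characteristic two -/
lemma sq_inj' [CharP k 2] (a b : k) (h : a ^ 2 = b ^ 2) : a = b := by
  have h2 : (2 : k) = 0 := by exact_mod_cast CharP.cast_eq_zero k 2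
  have : (a - b) ^ 2 = 0 := by linear_combination h + (b ^ 2 - a * b) * h2
  have := pow_eq_zero_iff (n := 2) (by norm_num) |>.1 this
  exact sub_eq_zero.1 this

end Aux

set_option maxHeartbeats 4000000 in
/-- singularity criterion for the intersection of two quadrics,
2-rank one case (Lemma 3.2 (b)). -/
theorem stmt_5 (k : Type*) [Field k] [IsAlgClosed k] [CharP k 2]
    (a1 a2 b1 b2 b3 b4 c1 c2 c3 d1 d2 d3 : k)
    (h12 : a1 ≠ a2) (hb : b1 * b2 = b3 * b4)
    (hb12 : ¬ (b1 = 0 ∧ b2 = 0 ∧ b3 = 0 ∧ b4 = 0)) :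
    (∃ v : Fin 6 → k, v ≠ 0 ∧
        eval v (Q1p k) = 0 ∧
        eval v (Q2b k a1 a2 b1 b2 b3 b4 c1 c2 c3 d1 d2 d3) = 0 ∧
        (Matrix.of fun (i : Fin 2) (j : Fin 6) =>
          eval v (pderiv j
            (![Q1p k, Q2b k a1 a2 b1 b2 b3 b4 c1 c2 c3 d1 d2 d3] i))).rank ≤ 1)
      ↔ c1 * d1 = 0 ∨ b2*b4*c2 + b1*b4*c3 + b1*b3*d2 + b2*b3*d3 = 0 := by
  have h2 : (2 : k) = 0 := by exact_mod_cast CharP.cast_eq_zero k 2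
  -- rank criterion helper (backward direction)
  have hrk : ∀ (v : Fin 6 → k) (c : k),
      (∀ j : Fin 6, eval v (pderiv j (Q2b k a1 a2 b1 b2 b3 b4 c1 c2 c3 d1 d2 d3))
        = c * eval v (pderiv j (Q1p k))) →
      (Matrix.of fun (i : Fin 2) (j : Fin 6) =>
          eval v (pderiv j
            (![Q1p k, Q2b k a1 a2 b1 b2 b3 b4 c1 c2 c3 d1 d2 d3] i))).rank ≤ 1 := by
    intro v c hc
    apply rank_le_one_of_rows' _ c
    intro j
    show eval v (pderiv j (![Q1p k, Q2b k a1 a2 b1 b2 b3 b4 c1 c2 c3 d1 d2 d3] 1))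
      = c * eval v (pderiv j (![Q1p k, Q2b k a1 a2 b1 b2 b3 b4 c1 c2 c3 d1 d2 d3] 0))
    rw [Matrix.cons_val_one, Matrix.cons_val_zero, Matrix.cons_val_zero]
    exact hc j
  constructor
  · rintro ⟨v, hv0, hq1, hq2, hrank⟩
    have hM0 : ∀ j : Fin 6,
        (Matrix.of fun (i : Fin 2) (j : Fin 6) =>
          eval v (pderiv j
            (![Q1p k, Q2b k a1 a2 b1 b2 b3 b4 c1 c2 c3 d1 d2 d3] i))) 0 j
        = ![v 3, v 4, v 5, v 0, v 1, v 2] j := by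
      intro j
      show eval v (pderiv j (![Q1p k, Q2b k a1 a2 b1 b2 b3 b4 c1 c2 c3 d1 d2 d3] 0)) = _
      rw [Matrix.cons_val_zero]
      exact pd_Q1' v j
    have hM1 : ∀ j : Fin 6,
        (Matrix.of fun (i : Fin 2) (j : Fin 6) =>
          eval v (pderiv j
            (![Q1p k, Q2b k a1 a2 b1 b2 b3 b4 c1 c2 c3 d1 d2 d3] i))) 1 j
        = ![a1 * v 3, a2 * v 4 + b1 * v 5 + b3 * v 2, a2 * v 5 + b2 * v 4 + b3 * v 1,
            a1 * v 0, a2 * v 1 + b2 * v 2 + b4 * v 5, a2 * v 2 + b1 * v 1 + b4 * v 4] j := by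
      intro j
      show eval v (pderiv j (![Q1p k, Q2b k a1 a2 b1 b2 b3 b4 c1 c2 c3 d1 d2 d3] 1)) = _
      rw [Matrix.cons_val_one, Matrix.cons_val_zero]
      exact pd_Q2' a1 a2 b1 b2 b3 b4 c1 c2 c3 d1 d2 d3 v j
    have hmin : ∀ i j : Fin 6,
        ![v 3, v 4, v 5, v 0, v 1, v 2] i *
          ![a1 * v 3, a2 * v 4 + b1 * v 5 + b3 * v 2, a2 * v 5 + b2 * v 4 + b3 * v 1,
            a1 * v 0, a2 * v 1 + b2 * v 2 + b4 * v 5, a2 * v 2 + b1 * v 1 + b4 * v 4] j -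
        ![v 3, v 4, v 5, v 0, v 1, v 2] j *
          ![a1 * v 3, a2 * v 4 + b1 * v 5 + b3 * v 2, a2 * v 5 + b2 * v 4 + b3 * v 1,
            a1 * v 0, a2 * v 1 + b2 * v 2 + b4 * v 5, a2 * v 2 + b1 * v 1 + b4 * v 4] i = 0 := by
      intro i j
      have := minor_eq_zero' _ hrank i j
      rwa [hM0, hM0, hM1, hM1] at this
    -- named minors
    have m45 : v 1 * (a2 * v 2 + b1 * v 1 + b4 * v 4) - v 2 * (a2 * v 1 + b2 * v 2 + b4 * v 5)
        = 0 := hmin 4 5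
    have m15 : v 4 * (a2 * v 2 + b1 * v 1 + b4 * v 4) - v 2 * (a2 * v 4 + b1 * v 5 + b3 * v 2)
        = 0 := hmin 1 5
    have m24 : v 5 * (a2 * v 1 + b2 * v 2 + b4 * v 5) - v 1 * (a2 * v 5 + b2 * v 4 + b3 * v 1)
        = 0 := hmin 2 4
    have m12 : v 4 * (a2 * v 5 + b2 * v 4 + b3 * v 1) - v 5 * (a2 * v 4 + b1 * v 5 + b3 * v 2)
        = 0 := hmin 1 2
    have hu4' : b1 * v 1 + b4 * v 4 = 0 := by
      have h : (b1 * v 1 + b4 * v 4) ^ 2 = 0 := by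
        linear_combination b1 * m45 + b4 * m15 + v 2 ^ 2 * hb
          + (b3 * b4 * v 2 ^ 2 + b1 * b4 * v 2 * v 5) * h2
      exact pow_eq_zero_iff (n := 2) (by norm_num) |>.1 h
    have hu3' : b2 * v 2 + b4 * v 5 = 0 := by
      have h : (b2 * v 2 + b4 * v 5) ^ 2 = 0 := by
        linear_combination -b2 * m45 + b4 * m24 + v 1 ^ 2 * hb
          + (b3 * b4 * v 1 ^ 2 + b2 * b4 * v 1 * v 4) * h2
      exact pow_eq_zero_iff (n := 2) (by norm_num) |>.1 h
    have hu2' : b2 * v 4 + b3 * v 1 = 0 := by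
      have h : (b2 * v 4 + b3 * v 1) ^ 2 = 0 := by
        linear_combination b2 * m12 - b3 * m24 + v 5 ^ 2 * hb
          + (b3 * b4 * v 5 ^ 2 + b2 * b3 * v 2 * v 5) * h2
      exact pow_eq_zero_iff (n := 2) (by norm_num) |>.1 h
    have hu1' : b1 * v 5 + b3 * v 2 = 0 := by
      have h : (b1 * v 5 + b3 * v 2) ^ 2 = 0 := by
        linear_combination -b1 * m12 - b3 * m15 + v 4 ^ 2 * hb
          + (b3 * b4 * v 4 ^ 2 + b1 * b3 * v 1 * v 4) * h2
      exact pow_eq_zero_iff (n := 2) (by norm_num) |>.1 h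
    have m01 : v 3 * (a2 * v 4 + b1 * v 5 + b3 * v 2) - v 4 * (a1 * v 3) = 0 := hmin 0 1
    have m02 : v 3 * (a2 * v 5 + b2 * v 4 + b3 * v 1) - v 5 * (a1 * v 3) = 0 := hmin 0 2
    have m04 : v 3 * (a2 * v 1 + b2 * v 2 + b4 * v 5) - v 1 * (a1 * v 3) = 0 := hmin 0 4
    have m05 : v 3 * (a2 * v 2 + b1 * v 1 + b4 * v 4) - v 2 * (a1 * v 3) = 0 := hmin 0 5
    have m31 : v 0 * (a2 * v 4 + b1 * v 5 + b3 * v 2) - v 4 * (a1 * v 0) = 0 := hmin 3 1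
    have m32 : v 0 * (a2 * v 5 + b2 * v 4 + b3 * v 1) - v 5 * (a1 * v 0) = 0 := hmin 3 2
    have m34 : v 0 * (a2 * v 1 + b2 * v 2 + b4 * v 5) - v 1 * (a1 * v 0) = 0 := hmin 3 4
    have m35 : v 0 * (a2 * v 2 + b1 * v 1 + b4 * v 4) - v 2 * (a1 * v 0) = 0 := hmin 3 5
    rw [eval_Q1'] at hq1
    rw [eval_Q2'] at hq2
    have hsub : a1 - a2 ≠ 0 := sub_ne_zero.2 h12
    by_cases hx1 : v 0 = 0
    · by_cases hy1 : v 3 = 0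
      · -- case x1 = y1 = 0
        have hw : ¬ (v 1 = 0 ∧ v 2 = 0 ∧ v 4 = 0 ∧ v 5 = 0) := by
          rintro ⟨e1, e2, e4, e5⟩
          apply hv0
          funext i
          fin_cases i <;> simp [hx1, hy1, e1, e2, e4, e5]
        have hq : v 1 * v 4 + v 2 * v 5 = 0 := by
          linear_combination hq1 - v 3 * hx1
        have hS : c2 * v 1 ^ 2 + c3 * v 2 ^ 2 + d2 * v 4 ^ 2 + d3 * v 5 ^ 2 = 0 := by
          linear_combination hq2 - a2 * hq - v 1 * hu1' - v 4 * hu3'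
            - (a1 * v 3 + c1 * v 0) * hx1 - d1 * v 3 * hy1
        rcases ne_or_eq b1 0 with hb1 | hb1
        · exact Or.inr (key' b1 b2 b3 b4 c2 c3 d2 d3 (v 1) (v 2) (v 4) (v 5)
            hb1 hb hu1' hu2' hu3' hu4' hq hS hw)
        rcases ne_or_eq b2 0 with hb2 | hb2
        · refine Or.inr ?_
          have := key' b2 b1 b3 b4 c3 c2 d3 d2 (v 2) (v 1) (v 5) (v 4) hb2
            (by linear_combination hb) (by linear_combination hu2')
            (by linear_combination hu1') (by linear_combination hu4')
            (by linear_combination hu3') (by linear_combination hq)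
            (by linear_combination hS)
            (fun ⟨p, q, r, t⟩ => hw ⟨q, p, t, r⟩)
          linear_combination this
        rcases ne_or_eq b3 0 with hb3 | hb3
        · refine Or.inr ?_
          have := key' b3 b4 b1 b2 c2 d3 d2 c3 (v 1) (v 5) (v 4) (v 2) hb3
            (by linear_combination -hb) (by linear_combination hu1')
            (by linear_combination hu4') (by linear_combination hu3')
            (by linear_combination hu2') (by linear_combination hq)
            (by linear_combination hS)
            (fun ⟨p, q, r, t⟩ => hw ⟨p, t, r, q⟩)
          linear_combination this
        have hb4 : b4 ≠ 0 := fun h4 => hb12 ⟨hb1, hb2, hb3, h4⟩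
        refine Or.inr ?_
        have := key' b4 b3 b2 b1 d2 c3 c2 d3 (v 4) (v 2) (v 1) (v 5) hb4
          (by linear_combination -hb) (by linear_combination hu3')
          (by linear_combination hu2') (by linear_combination hu1')
          (by linear_combination hu4') (by linear_combination hq)
          (by linear_combination hS)
          (fun ⟨p, q, r, t⟩ => hw ⟨r, q, p, t⟩)
        linear_combination this
      · -- y1 ≠ 0 (x1 = 0): get w = 0, then d1 = 0
        have e5 : (a1 - a2) * (v 3 * v 4) = 0 := by
          linear_combination v 3 * hu1' - m01
        have e6 : (a1 - a2) * (v 3 * v 5) = 0 := by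
          linear_combination v 3 * hu2' - m02
        have e7 : (a1 - a2) * (v 3 * v 1) = 0 := by
          linear_combination v 3 * hu3' - m04
        have e8 : (a1 - a2) * (v 3 * v 2) = 0 := by
          linear_combination v 3 * hu4' - m05
        have hv4 : v 4 = 0 := by
          have := (mul_eq_zero.1 e5).resolve_left hsub
          exact (mul_eq_zero.1 this).resolve_left hy1
        have hv5 : v 5 = 0 := by
          have := (mul_eq_zero.1 e6).resolve_left hsub
          exact (mul_eq_zero.1 this).resolve_left hy1
        have hv1 : v 1 = 0 := by
          have := (mul_eq_zero.1 e7).resolve_left hsub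
          exact (mul_eq_zero.1 this).resolve_left hy1
        have hv2 : v 2 = 0 := by
          have := (mul_eq_zero.1 e8).resolve_left hsub
          exact (mul_eq_zero.1 this).resolve_left hy1
        have hd1 : d1 * v 3 ^ 2 = 0 := by
          linear_combination hq2 - (a1 * v 3 + c1 * v 0) * hx1
            - (a2 * v 4 + b3 * v 2 + c2 * v 1) * hv1 - (a2 * v 5 + c3 * v 2 + b2 * v 4) * hv2
            - (b4 * v 5 + d2 * v 4) * hv4 - (b1 * v 1 + d3 * v 5) * hv5
        have : d1 = 0 := (mul_eq_zero.1 hd1).resolve_right (pow_ne_zero 2 hy1)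
        exact Or.inl (by rw [this, mul_zero])
    · -- x1 ≠ 0: get w = 0, then y1 = 0, c1 = 0
      have e1 : (a1 - a2) * (v 0 * v 4) = 0 := by
        linear_combination v 0 * hu1' - m31
      have e2 : (a1 - a2) * (v 0 * v 5) = 0 := by
        linear_combination v 0 * hu2' - m32
      have e3 : (a1 - a2) * (v 0 * v 1) = 0 := by
        linear_combination v 0 * hu3' - m34
      have e4 : (a1 - a2) * (v 0 * v 2) = 0 := by
        linear_combination v 0 * hu4' - m35
      have hv4 : v 4 = 0 := by
        have := (mul_eq_zero.1 e1).resolve_left hsub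
        exact (mul_eq_zero.1 this).resolve_left hx1
      have hv5 : v 5 = 0 := by
        have := (mul_eq_zero.1 e2).resolve_left hsub
        exact (mul_eq_zero.1 this).resolve_left hx1
      have hv1 : v 1 = 0 := by
        have := (mul_eq_zero.1 e3).resolve_left hsub
        exact (mul_eq_zero.1 this).resolve_left hx1
      have hv2 : v 2 = 0 := by
        have := (mul_eq_zero.1 e4).resolve_left hsub
        exact (mul_eq_zero.1 this).resolve_left hx1
      have hy1 : v 3 = 0 := by
        have : v 0 * v 3 = 0 := by
          linear_combination hq1 - v 4 * hv1 - v 5 * hv2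
        exact (mul_eq_zero.1 this).resolve_left hx1
      have hc1 : c1 * v 0 ^ 2 = 0 := by
        linear_combination hq2 - (a1 * v 0 + d1 * v 3) * hy1
          - (a2 * v 4 + b3 * v 2 + c2 * v 1) * hv1 - (a2 * v 5 + c3 * v 2 + b2 * v 4) * hv2
          - (b4 * v 5 + d2 * v 4) * hv4 - (b1 * v 1 + d3 * v 5) * hv5
      have : c1 = 0 := (mul_eq_zero.1 hc1).resolve_right (pow_ne_zero 2 hx1)
      exact Or.inl (by rw [this, zero_mul])
  · -- backward direction
    set s : k → k := fun x => (frobeniusEquiv k 2).symm x with hs_def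
    have hs : ∀ x : k, s x ^ 2 = x := by
      intro x
      have := (frobeniusEquiv k 2).apply_symm_apply x
      rwa [frobeniusEquiv_def] at this
    have hs0 : ∀ x : k, s x = 0 → x = 0 := by
      intro x h
      rw [← hs x, h]
      ring
    rintro (hcd | hE)
    · rcases mul_eq_zero.1 hcd with hc1 | hd1
      · refine ⟨![1, 0, 0, 0, 0, 0], ?_, ?_, ?_, ?_⟩
        · intro h
          have := congrFun h 0
          simp [v6_0, v6_1, v6_2, v6_3, v6_4, v6_5] at this
        · rw [eval_Q1']; norm_num [v6_0, v6_1, v6_2, v6_3, v6_4, v6_5]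
        · rw [eval_Q2']; norm_num [v6_0, v6_1, v6_2, v6_3, v6_4, v6_5, hc1]
        · apply hrk _ a1
          intro j
          rw [pd_Q2', pd_Q1']
          fin_cases j <;> norm_num [v6_0, v6_1, v6_2, v6_3, v6_4, v6_5]
      · refine ⟨![0, 0, 0, 1, 0, 0], ?_, ?_, ?_, ?_⟩
        · intro h
          have := congrFun h 3
          simp [v6_0, v6_1, v6_2, v6_3, v6_4, v6_5] at this
        · rw [eval_Q1']; norm_num [v6_0, v6_1, v6_2, v6_3, v6_4, v6_5]
        · rw [eval_Q2']; norm_num [v6_0, v6_1, v6_2, v6_3, v6_4, v6_5, hd1]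
        · apply hrk _ a1
          intro j
          rw [pd_Q2', pd_Q1']
          fin_cases j <;> norm_num [v6_0, v6_1, v6_2, v6_3, v6_4, v6_5]
    · by_cases hdeg : b2 * b4 = 0 ∧ b1 * b4 = 0 ∧ b1 * b3 = 0 ∧ b2 * b3 = 0
      · -- degenerate: exactly one bᵢ nonzero
        obtain ⟨p1, p2, p3, p4⟩ := hdeg
        rcases ne_or_eq b1 0 with hb1 | hb1
        · have hb4 : b4 = 0 := (mul_eq_zero.1 p2).resolve_left hb1
          have hb3 : b3 = 0 := (mul_eq_zero.1 p3).resolve_left hb1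
          have hb2 : b2 = 0 := by
            have : b1 * b2 = 0 := by rw [hb, hb3, zero_mul]
            exact (mul_eq_zero.1 this).resolve_left hb1
          by_cases hcd : c3 = 0 ∧ d2 = 0
          · refine ⟨![0, 0, 1, 0, 0, 0], ?_, ?_, ?_, ?_⟩
            · intro h; have := congrFun h 2; simp [v6_0, v6_1, v6_2, v6_3, v6_4, v6_5] at this
            · rw [eval_Q1']; norm_num [v6_0, v6_1, v6_2, v6_3, v6_4, v6_5]
            · rw [eval_Q2']; norm_num [v6_0, v6_1, v6_2, v6_3, v6_4, v6_5, hcd.1]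
            · apply hrk _ a2
              intro j
              rw [pd_Q2', pd_Q1']
              fin_cases j <;> norm_num [v6_0, v6_1, v6_2, v6_3, v6_4, v6_5, hb2, hb3, hb4]
          · refine ⟨![0, 0, s d2, 0, s c3, 0], ?_, ?_, ?_, ?_⟩
            · intro h
              apply hcd
              constructor
              · exact hs0 _ (congrFun h 4)
              · exact hs0 _ (congrFun h 2)
            · rw [eval_Q1']; norm_num [v6_0, v6_1, v6_2, v6_3, v6_4, v6_5]
            · rw [eval_Q2']
              norm_num [v6_0, v6_1, v6_2, v6_3, v6_4, v6_5, hb2, hb3, hb4]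
              linear_combination c3 * hs d2 + d2 * hs c3 + (c3 * d2) * h2
            · apply hrk _ a2
              intro j
              rw [pd_Q2', pd_Q1']
              fin_cases j <;> norm_num [v6_0, v6_1, v6_2, v6_3, v6_4, v6_5, hb2, hb3, hb4]
        rcases ne_or_eq b2 0 with hb2 | hb2
        · have hb4 : b4 = 0 := (mul_eq_zero.1 p1).resolve_left hb2
          have hb3 : b3 = 0 := (mul_eq_zero.1 p4).resolve_left hb2
          by_cases hcd : c2 = 0 ∧ d3 = 0
          · refine ⟨![0, 1, 0, 0, 0, 0], ?_, ?_, ?_, ?_⟩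
            · intro h; have := congrFun h 1; simp [v6_0, v6_1, v6_2, v6_3, v6_4, v6_5] at this
            · rw [eval_Q1']; norm_num [v6_0, v6_1, v6_2, v6_3, v6_4, v6_5]
            · rw [eval_Q2']; norm_num [v6_0, v6_1, v6_2, v6_3, v6_4, v6_5, hcd.1, hb1, hb3]
            · apply hrk _ a2
              intro j
              rw [pd_Q2', pd_Q1']
              fin_cases j <;> norm_num [v6_0, v6_1, v6_2, v6_3, v6_4, v6_5, hb1, hb3, hb4]
          · refine ⟨![0, s d3, 0, 0, 0, s c2], ?_, ?_, ?_, ?_⟩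
            · intro h
              apply hcd
              exact ⟨hs0 _ (congrFun h 5), hs0 _ (congrFun h 1)⟩
            · rw [eval_Q1']; norm_num [v6_0, v6_1, v6_2, v6_3, v6_4, v6_5]
            · rw [eval_Q2']
              norm_num [v6_0, v6_1, v6_2, v6_3, v6_4, v6_5, hb1, hb3, hb4]
              linear_combination c2 * hs d3 + d3 * hs c2 + (c2 * d3) * h2
            · apply hrk _ a2
              intro j
              rw [pd_Q2', pd_Q1']
              fin_cases j <;> norm_num [v6_0, v6_1, v6_2, v6_3, v6_4, v6_5, hb1, hb3, hb4]
        rcases ne_or_eq b3 0 with hb3 | hb3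
        · have hb4 : b4 = 0 := by
            have : b3 * b4 = 0 := by rw [← hb, hb1, zero_mul]
            exact (mul_eq_zero.1 this).resolve_left hb3
          by_cases hcd : d2 = 0 ∧ d3 = 0
          · refine ⟨![0, 0, 0, 0, 1, 0], ?_, ?_, ?_, ?_⟩
            · intro h; have := congrFun h 4; simp [v6_0, v6_1, v6_2, v6_3, v6_4, v6_5] at this
            · rw [eval_Q1']; norm_num [v6_0, v6_1, v6_2, v6_3, v6_4, v6_5]
            · rw [eval_Q2']; norm_num [v6_0, v6_1, v6_2, v6_3, v6_4, v6_5, hcd.1, hb4]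
            · apply hrk _ a2
              intro j
              rw [pd_Q2', pd_Q1']
              fin_cases j <;> norm_num [v6_0, v6_1, v6_2, v6_3, v6_4, v6_5, hb1, hb2, hb4]
          · refine ⟨![0, 0, 0, 0, s d3, s d2], ?_, ?_, ?_, ?_⟩
            · intro h
              apply hcd
              exact ⟨hs0 _ (congrFun h 5), hs0 _ (congrFun h 4)⟩
            · rw [eval_Q1']; norm_num [v6_0, v6_1, v6_2, v6_3, v6_4, v6_5]
            · rw [eval_Q2']
              norm_num [v6_0, v6_1, v6_2, v6_3, v6_4, v6_5, hb1, hb2, hb4]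
              linear_combination d2 * hs d3 + d3 * hs d2 + (d2 * d3) * h2
            · apply hrk _ a2
              intro j
              rw [pd_Q2', pd_Q1']
              fin_cases j <;> norm_num [v6_0, v6_1, v6_2, v6_3, v6_4, v6_5, hb1, hb2, hb4]
        · have hb4 : b4 ≠ 0 := fun h4 => hb12 ⟨hb1, hb2, hb3, h4⟩
          by_cases hcd : c2 = 0 ∧ c3 = 0
          · refine ⟨![0, 1, 0, 0, 0, 0], ?_, ?_, ?_, ?_⟩
            · intro h; have := congrFun h 1; simp [v6_0, v6_1, v6_2, v6_3, v6_4, v6_5] at this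
            · rw [eval_Q1']; norm_num [v6_0, v6_1, v6_2, v6_3, v6_4, v6_5]
            · rw [eval_Q2']; norm_num [v6_0, v6_1, v6_2, v6_3, v6_4, v6_5, hcd.1, hb1, hb3]
            · apply hrk _ a2
              intro j
              rw [pd_Q2', pd_Q1']
              fin_cases j <;> norm_num [v6_0, v6_1, v6_2, v6_3, v6_4, v6_5, hb1, hb2, hb3]
          · refine ⟨![0, s c3, s c2, 0, 0, 0], ?_, ?_, ?_, ?_⟩
            · intro h
              apply hcd
              exact ⟨hs0 _ (congrFun h 2), hs0 _ (congrFun h 1)⟩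
            · rw [eval_Q1']; norm_num [v6_0, v6_1, v6_2, v6_3, v6_4, v6_5]
            · rw [eval_Q2']
              norm_num [v6_0, v6_1, v6_2, v6_3, v6_4, v6_5, hb1, hb2, hb3]
              linear_combination c2 * hs c3 + c3 * hs c2 + (c2 * c3) * h2
            · apply hrk _ a2
              intro j
              rw [pd_Q2', pd_Q1']
              fin_cases j <;> norm_num [v6_0, v6_1, v6_2, v6_3, v6_4, v6_5, hb1, hb2, hb3]
      · -- nondegenerate: the candidate vector works
        push_neg at hdeg
        refine ⟨![0, s (b2 * b4), s (b1 * b4), 0, s (b1 * b3), s (b2 * b3)], ?_, ?_, ?_, ?_⟩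
        · intro h
          by_cases e1 : b2 * b4 = 0
          · by_cases e2 : b1 * b4 = 0
            · by_cases e3 : b1 * b3 = 0
              · exact hdeg e1 e2 e3 (hs0 _ (congrFun h 5))
              · exact e3 (hs0 _ (congrFun h 4))
            · exact e2 (hs0 _ (congrFun h 2))
          · exact e1 (hs0 _ (congrFun h 1))
        · rw [eval_Q1']
          norm_num [v6_0, v6_1, v6_2, v6_3, v6_4, v6_5]
          have hprod : s (b2 * b4) * s (b1 * b3) = s (b1 * b4) * s (b2 * b3) := by
            rw [← map_mul, ← map_mul]
            ring_nf
          linear_combination hprod + (s (b1 * b4) * s (b2 * b3)) * h2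
        · rw [eval_Q2']
          have e1 : s (b2 * b4) ^ 2 = b2 * b4 := hs _
          have e2 : s (b1 * b4) ^ 2 = b1 * b4 := hs _
          have e3 : s (b1 * b3) ^ 2 = b1 * b3 := hs _
          have e4 : s (b2 * b3) ^ 2 = b2 * b3 := hs _
          have hprod : s (b2 * b4) * s (b1 * b3) = s (b1 * b4) * s (b2 * b3) := by
            rw [← map_mul, ← map_mul]; ring_nf
          have hB1 : b1 * (s (b2 * b4) * s (b2 * b3)) = b1 * b2 * s (b3 * b4) := by
            apply sq_inj'
            simp only [mul_pow, hs]
            ring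
          have hB2 : b2 * (s (b1 * b4) * s (b1 * b3)) = b1 * b2 * s (b3 * b4) := by
            apply sq_inj'
            simp only [mul_pow, hs]
            ring
          have hB3 : b3 * (s (b2 * b4) * s (b1 * b4)) = b3 * b4 * s (b1 * b2) := by
            apply sq_inj'
            simp only [mul_pow, hs]
            ring
          have hB4 : b4 * (s (b1 * b3) * s (b2 * b3)) = b3 * b4 * s (b1 * b2) := by
            apply sq_inj'
            simp only [mul_pow, hs]
            ring
          norm_num [v6_0, v6_1, v6_2, v6_3, v6_4, v6_5]
          linear_combination a2 * hprod + c2 * e1 + c3 * e2 + d2 * e3 + d3 * e4 + hE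
            + hB1 + hB2 + hB3 + hB4
            + (a2 * s (b1 * b4) * s (b2 * b3) + b1 * b2 * s (b3 * b4)
               + b3 * b4 * s (b1 * b2)) * h2
        · apply hrk _ a2
          have hA1 : b1 * s (b2 * b3) + b3 * s (b1 * b4) = 0 := by
            have : b1 * s (b2 * b3) = b3 * s (b1 * b4) := by
              apply sq_inj'
              rw [mul_pow, mul_pow, hs, hs]
              linear_combination b1 * b3 * hb
            linear_combination this + (b3 * s (b1 * b4)) * h2
          have hA2 : b2 * s (b1 * b3) + b3 * s (b2 * b4) = 0 := by
            have : b2 * s (b1 * b3) = b3 * s (b2 * b4) := by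
              apply sq_inj'
              rw [mul_pow, mul_pow, hs, hs]
              linear_combination b2 * b3 * hb
            linear_combination this + (b3 * s (b2 * b4)) * h2
          have hA3 : b2 * s (b1 * b4) + b4 * s (b2 * b3) = 0 := by
            have : b2 * s (b1 * b4) = b4 * s (b2 * b3) := by
              apply sq_inj'
              rw [mul_pow, mul_pow, hs, hs]
              linear_combination b2 * b4 * hb
            linear_combination this + (b4 * s (b2 * b3)) * h2
          have hA4 : b1 * s (b2 * b4) + b4 * s (b1 * b3) = 0 := by
            have : b1 * s (b2 * b4) = b4 * s (b1 * b3) := by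
              apply sq_inj'
              rw [mul_pow, mul_pow, hs, hs]
              linear_combination b1 * b4 * hb
            linear_combination this + (b4 * s (b1 * b3)) * h2
          intro j
          rw [pd_Q2', pd_Q1']
          fin_cases j <;> norm_num [v6_0, v6_1, v6_2, v6_3, v6_4, v6_5]
          · linear_combination hA1
          · linear_combination hA2
          · linear_combination hA3
          · linear_combination hA4
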